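/- arXiv:1701.07446 — 2 statements merged into one kernel-verified Lean document; each statement's English description precedes it below -/
import Mathlib

section
/- For any 0 < ε̂ < 1/2, the regularized Flory–Huggins potential Ĝ (as defined piecewise above) is convex on ℝ. -/
/-- The regularized Flory–Huggins potential with regularization parameter `e`. -/
noncomputable def Ghat (e ρ : ℝ) : ℝ :=
  if 1 - e ≤ ρ then
    ρ * Real.log ρ + (1 - ρ) ^ 2 / (2 * e) + (1 - ρ) * Real.log e - e / 2
  else if e ≤ ρ then
    ρ * Real.log ρ + (1 - ρ) * Real.log (1 - ρ)
  else
    (1 - ρ) * Real.log (1 - ρ) + ρ ^ 2 / (2 * e) + ρ * Real.log e - e / 2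

open Real Set Filter

noncomputable def FH1 (e ρ : ℝ) : ℝ :=
  (1 - ρ) * Real.log (1 - ρ) + ρ ^ 2 / (2 * e) + ρ * Real.log e - e / 2

noncomputable def FH2 (ρ : ℝ) : ℝ :=
  ρ * Real.log ρ + (1 - ρ) * Real.log (1 - ρ)

noncomputable def FH3 (e ρ : ℝ) : ℝ :=
  ρ * Real.log ρ + (1 - ρ) ^ 2 / (2 * e) + (1 - ρ) * Real.log e - e / 2

noncomputable def FHg (e ρ : ℝ) : ℝ :=
  if 1 - e ≤ ρ then Real.log ρ + 1 + (ρ - 1) / e - Real.log e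
  else if e ≤ ρ then Real.log ρ - Real.log (1 - ρ)
  else - Real.log (1 - ρ) - 1 + ρ / e + Real.log e

lemma hasDerivAt_FH1 (e x : ℝ) (he : e ≠ 0) (hx : x < 1) :
    HasDerivAt (FH1 e) (- Real.log (1 - x) - 1 + x / e + Real.log e) x := by
  have h1 : (1 : ℝ) - x ≠ 0 := by linarith
  have hA : HasDerivAt (fun ρ : ℝ => 1 - ρ) (0 - 1) x :=
    (hasDerivAt_const x 1).sub (hasDerivAt_id x)
  have hlog : HasDerivAt (fun ρ : ℝ => Real.log (1 - ρ)) ((1 - x)⁻¹ * (0 - 1)) x :=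
    (Real.hasDerivAt_log h1).comp x hA
  have hmul := hA.mul hlog
  have hpow := (hasDerivAt_pow 2 x).div_const (2 * e)
  have hlin := (hasDerivAt_id x).mul_const (Real.log e)
  have := ((hmul.add hpow).add hlin).sub_const (e / 2)
  refine this.congr_deriv ?_
  field_simp
  ring

lemma hasDerivAt_FH2 (x : ℝ) (h0 : 0 < x) (h1 : x < 1) :
    HasDerivAt FH2 (Real.log x - Real.log (1 - x)) x := by
  have h1' : (1 : ℝ) - x ≠ 0 := by linarith
  have hA : HasDerivAt (fun ρ : ℝ => 1 - ρ) (0 - 1) x :=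
    (hasDerivAt_const x 1).sub (hasDerivAt_id x)
  have hlog : HasDerivAt (fun ρ : ℝ => Real.log (1 - ρ)) ((1 - x)⁻¹ * (0 - 1)) x :=
    (Real.hasDerivAt_log h1').comp x hA
  have hmul := hA.mul hlog
  have hL := (hasDerivAt_id x).mul (Real.hasDerivAt_log h0.ne')
  have := hL.add hmul
  refine this.congr_deriv ?_
  simp only [id_eq]
  field_simp
  ring

lemma hasDerivAt_FH3 (e x : ℝ) (he : e ≠ 0) (hx : 0 < x) :
    HasDerivAt (FH3 e) (Real.log x + 1 + (x - 1) / e - Real.log e) x := by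
  have hA : HasDerivAt (fun ρ : ℝ => 1 - ρ) (0 - 1) x :=
    (hasDerivAt_const x 1).sub (hasDerivAt_id x)
  have hL := (hasDerivAt_id x).mul (Real.hasDerivAt_log hx.ne')
  have hpow : HasDerivAt (fun ρ : ℝ => (1 - ρ) ^ 2 / (2 * e))
      ((2 : ℕ) * (1 - x) ^ (2 - 1) * (0 - 1) / (2 * e)) x := by
    exact (((hasDerivAt_pow 2 (1 - x)).comp x hA)).div_const (2 * e)
  have hlin := hA.mul_const (Real.log e)
  have := ((hL.add hpow).add hlin).sub_const (e / 2)
  refine this.congr_deriv ?_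
  simp only [id_eq]
  field_simp
  ring

lemma Ghat_eq1 (e : ℝ) (he0 : 0 < e) (he : e < 1 / 2) :
    ∀ ρ ≤ e, Ghat e ρ = FH1 e ρ := by
  intro ρ hρ
  unfold Ghat FH1
  rw [if_neg (by linarith)]
  rcases lt_or_eq_of_le hρ with h | h
  · rw [if_neg (by linarith)]
  · rw [if_pos (le_of_eq h.symm)]
    subst h
    have : ρ ^ 2 / (2 * ρ) = ρ / 2 := by
      field_simp
    rw [this]
    ring

lemma Ghat_eq2 (e : ℝ) (he0 : 0 < e) (he : e < 1 / 2) :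
    ∀ ρ, e ≤ ρ → ρ ≤ 1 - e → Ghat e ρ = FH2 ρ := by
  intro ρ h1 h2
  unfold Ghat FH2
  rcases lt_or_eq_of_le h2 with h | h
  · rw [if_neg (by linarith), if_pos h1]
  · rw [if_pos (le_of_eq h.symm)]
    have h1ρ : 1 - ρ = e := by linarith
    rw [h1ρ]
    have : e ^ 2 / (2 * e) = e / 2 := by
      field_simp
    rw [this]
    ring

lemma Ghat_eq3 (e : ℝ) : ∀ ρ, 1 - e ≤ ρ → Ghat e ρ = FH3 e ρ := by
  intro ρ h
  unfold Ghat FH3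
  rw [if_pos h]

lemma FHg_eq1 (e : ℝ) (he0 : 0 < e) (he : e < 1 / 2) :
    ∀ ρ ≤ e, FHg e ρ = - Real.log (1 - ρ) - 1 + ρ / e + Real.log e := by
  intro ρ hρ
  unfold FHg
  rw [if_neg (by linarith)]
  rcases lt_or_eq_of_le hρ with h | h
  · rw [if_neg (by linarith)]
  · rw [if_pos (le_of_eq h.symm)]
    subst h
    rw [div_self he0.ne']
    ring

lemma FHg_eq2 (e : ℝ) (he0 : 0 < e) (he : e < 1 / 2) :
    ∀ ρ, e ≤ ρ → ρ ≤ 1 - e → FHg e ρ = Real.log ρ - Real.log (1 - ρ) := by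
  intro ρ h1 h2
  unfold FHg
  rcases lt_or_eq_of_le h2 with h | h
  · rw [if_neg (by linarith), if_pos h1]
  · rw [if_pos (le_of_eq h.symm)]
    have h1ρ : 1 - ρ = e := by linarith
    rw [h1ρ]
    have : (ρ - 1) / e = -1 := by
      rw [show ρ - 1 = -e by linarith]
      field_simp
    rw [this]
    ring

lemma FHg_eq3 (e : ℝ) : ∀ ρ, 1 - e ≤ ρ → FHg e ρ = Real.log ρ + 1 + (ρ - 1) / e - Real.log e := by
  intro ρ h
  unfold FHg
  rw [if_pos h]

lemma hasDerivAt_Ghat (e : ℝ) (he0 : 0 < e) (he : e < 1 / 2) (x : ℝ) :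
    HasDerivAt (Ghat e) (FHg e x) x := by
  have he1 : e < 1 - e := by linarith
  rcases lt_trichotomy x e with hx | hx | hx
  · -- x < e : use FH1 locally
    rw [FHg_eq1 e he0 he x hx.le]
    exact (hasDerivAt_FH1 e x he0.ne' (by linarith)).congr_of_eventuallyEq
      (Filter.eventuallyEq_of_mem (Iio_mem_nhds hx) (fun ρ hρ => Ghat_eq1 e he0 he ρ (le_of_lt hρ)))
  · -- x = e : junction
    rw [hx]
    have hleft : HasDerivWithinAt (Ghat e) (FHg e e) (Iic e) e := by
      rw [FHg_eq1 e he0 he e le_rfl]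
      exact ((hasDerivAt_FH1 e e he0.ne' (by linarith)).hasDerivWithinAt).congr
        (fun ρ hρ => Ghat_eq1 e he0 he ρ hρ) (Ghat_eq1 e he0 he e le_rfl)
    have hright : HasDerivWithinAt (Ghat e) (FHg e e) (Ici e) e := by
      rw [FHg_eq2 e he0 he e le_rfl he1.le]
      refine ((hasDerivAt_FH2 e he0 (by linarith)).hasDerivWithinAt).congr_of_eventuallyEq ?_
        (Ghat_eq2 e he0 he e le_rfl he1.le)
      have h1 : ∀ᶠ ρ in nhdsWithin e (Ici e), ρ < 1 - e :=
        eventually_nhdsWithin_of_eventually_nhds (eventually_lt_nhds he1)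
      filter_upwards [h1, eventually_mem_nhdsWithin] with ρ hρ1 hρ2
      exact Ghat_eq2 e he0 he ρ hρ2 hρ1.le
    have := hleft.union hright
    rwa [Iic_union_Ici, hasDerivWithinAt_univ] at this
  · rcases lt_trichotomy x (1 - e) with hx2 | hx2 | hx2
    · -- e < x < 1 - e
      rw [FHg_eq2 e he0 he x hx.le hx2.le]
      refine (hasDerivAt_FH2 x (by linarith) (by linarith)).congr_of_eventuallyEq ?_
      have h1 : Ioo e (1 - e) ∈ nhds x := Ioo_mem_nhds hx hx2
      exact Filter.eventuallyEq_of_mem h1 (fun ρ hρ => Ghat_eq2 e he0 he ρ hρ.1.le hρ.2.le)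
    · -- x = 1 - e : junction
      rw [hx2]
      have hleft : HasDerivWithinAt (Ghat e) (FHg e (1 - e)) (Iic (1 - e)) (1 - e) := by
        rw [FHg_eq2 e he0 he (1 - e) he1.le le_rfl]
        refine ((hasDerivAt_FH2 (1 - e) (by linarith) (by linarith)).hasDerivWithinAt).congr_of_eventuallyEq ?_
          (Ghat_eq2 e he0 he (1 - e) he1.le le_rfl)
        have h1 : ∀ᶠ ρ in nhdsWithin (1 - e) (Iic (1 - e)), e < ρ :=
          eventually_nhdsWithin_of_eventually_nhds (eventually_gt_nhds he1)
        filter_upwards [h1, eventually_mem_nhdsWithin] with ρ hρ1 hρ2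
        exact Ghat_eq2 e he0 he ρ hρ1.le hρ2
      have hright : HasDerivWithinAt (Ghat e) (FHg e (1 - e)) (Ici (1 - e)) (1 - e) := by
        rw [FHg_eq3 e (1 - e) le_rfl]
        exact ((hasDerivAt_FH3 e (1 - e) he0.ne' (by linarith)).hasDerivWithinAt).congr
          (fun ρ hρ => Ghat_eq3 e ρ hρ) (Ghat_eq3 e (1 - e) le_rfl)
      have := hleft.union hright
      rwa [Iic_union_Ici, hasDerivWithinAt_univ] at this
    · -- x > 1 - e
      rw [FHg_eq3 e x hx2.le]
      exact (hasDerivAt_FH3 e x he0.ne' (by linarith)).congr_of_eventuallyEq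
        (Filter.eventuallyEq_of_mem (Ioi_mem_nhds hx2) (fun ρ hρ => Ghat_eq3 e ρ (le_of_lt hρ)))

lemma FHg_mono (e : ℝ) (he0 : 0 < e) (he : e < 1 / 2) : Monotone (FHg e) := by
  have he1 : e < 1 - e := by linarith
  have m1 : ∀ x y, x ≤ y → y ≤ e → FHg e x ≤ FHg e y := by
    intro x y hxy hy
    rw [FHg_eq1 e he0 he x (hxy.trans hy), FHg_eq1 e he0 he y hy]
    have hlog : Real.log (1 - y) ≤ Real.log (1 - x) :=
      Real.log_le_log (by linarith) (by linarith)
    have hdiv : x / e ≤ y / e := by gcongr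
    linarith
  have m2 : ∀ x y, e ≤ x → x ≤ y → y ≤ 1 - e → FHg e x ≤ FHg e y := by
    intro x y hx hxy hy
    rw [FHg_eq2 e he0 he x hx (hxy.trans hy), FHg_eq2 e he0 he y (hx.trans hxy) hy]
    have h1 : Real.log x ≤ Real.log y := Real.log_le_log (by linarith) hxy
    have h2 : Real.log (1 - y) ≤ Real.log (1 - x) :=
      Real.log_le_log (by linarith) (by linarith)
    linarith
  have m3 : ∀ x y, 1 - e ≤ x → x ≤ y → FHg e x ≤ FHg e y := by
    intro x y hx hxy
    rw [FHg_eq3 e x hx, FHg_eq3 e y (hx.trans hxy)]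
    have h1 : Real.log x ≤ Real.log y := Real.log_le_log (by linarith) hxy
    have hdiv : (x - 1) / e ≤ (y - 1) / e := by gcongr
    linarith
  intro x y hxy
  rcases le_or_gt y e with h | h
  · exact m1 x y hxy h
  rcases le_or_gt x e with h2 | h2
  · rcases le_or_gt y (1 - e) with h3 | h3
    · exact (m1 x e h2 le_rfl).trans (m2 e y le_rfl h.le h3)
    · exact ((m1 x e h2 le_rfl).trans (m2 e (1 - e) le_rfl he1.le le_rfl)).trans
        (m3 (1 - e) y le_rfl h3.le)
  rcases le_or_gt y (1 - e) with h3 | h3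
  · exact m2 x y h2.le hxy h3
  rcases le_or_gt x (1 - e) with h4 | h4
  · exact (m2 x (1 - e) h2.le h4 le_rfl).trans (m3 (1 - e) y le_rfl h3.le)
  · exact m3 x y h4.le hxy

theorem stmt_5 (e : ℝ) (he0 : 0 < e) (he : e < 1 / 2) :
    ConvexOn ℝ Set.univ (Ghat e) := by
  have key := hasDerivAt_Ghat e he0 he
  have hdiff : Differentiable ℝ (Ghat e) := fun x => (key x).differentiableAt
  refine MonotoneOn.convexOn_of_deriv convex_univ hdiff.continuous.continuousOn
    (by rw [interior_univ]; exact hdiff.differentiableOn) ?_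
  rw [interior_univ]
  intro x _ y _ hxy
  rw [(key x).deriv, (key y).deriv]
  exact FHg_mono e he0 he hxy
end

section
/- For any 0 < ε̂ < 1/2, the regularized Flory–Huggins potential Ĝ is bounded below on ℝ by -ln 2 - ε̂/2. -/
lemma log2_ge : (2:ℝ)/3 ≤ Real.log 2 := by
  have h1 := Real.exp_one_lt_d9
  have h2 : Real.exp (2/3) ^ 3 = Real.exp 1 ^ 2 := by
    rw [← Real.exp_nat_mul, ← Real.exp_nat_mul]; norm_num
  have h3 : Real.exp (2/3) < 2 := by
    have hp : Real.exp (2/3) ^ 3 < 2 ^ 3 := by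
      rw [h2]; nlinarith [Real.exp_pos 1]
    exact lt_of_pow_lt_pow_left₀ 3 (by norm_num) hp
  have := (Real.lt_log_iff_exp_lt (by norm_num : (0:ℝ) < 2)).mpr h3
  linarith

lemma quad (e t : ℝ) (he0 : 0 < e) (he : e < 1/2) (ht0 : 0 < t) (hte : t ≤ e) :
    -Real.log 2 ≤ -t + t^2/(2*e) + t * Real.log e := by
  have hle : Real.log e < 0 := Real.log_neg he0 (by linarith)
  have hs : Real.sqrt e ^ 2 = e := Real.sq_sqrt he0.le
  have hs0 : 0 < Real.sqrt e := Real.sqrt_pos.mpr he0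
  have hloge : Real.log e = 2 * Real.log (Real.sqrt e) := by
    rw [Real.log_sqrt he0.le]; ring
  have h2 := log2_ge
  have h3 : e * Real.log e ≤ t * Real.log e := by nlinarith
  have h4 : -e/2 ≤ -t + t^2/(2*e) := by
    have hnn : (0:ℝ) ≤ (t-e)^2/(2*e) := by positivity
    have heq : (t-e)^2/(2*e) = -t + t^2/(2*e) + e/2 := by field_simp; ring
    linarith
  have h5 : 2*e - 2*Real.sqrt e ≤ e * Real.log e := by
    have hinv : Real.log (Real.sqrt e)⁻¹ ≤ (Real.sqrt e)⁻¹ - 1 :=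
      Real.log_le_sub_one_of_pos (by positivity)
    rw [Real.log_inv] at hinv
    have h := mul_le_mul_of_nonneg_left hinv (by positivity : (0:ℝ) ≤ 2*e)
    have hss : 2*e*((Real.sqrt e)⁻¹ - 1) = 2*Real.sqrt e - 2*e := by
      field_simp; nlinarith [hs]
    rw [hss] at h
    rw [hloge]; linarith
  have h6 : 2*Real.sqrt e - 3*e/2 ≤ 2/3 := by nlinarith [sq_nonneg (Real.sqrt e - 2/3)]
  linarith

lemma mid (ρ : ℝ) (h0 : 0 < ρ) (h1 : ρ < 1) :
    -Real.log 2 ≤ ρ * Real.log ρ + (1-ρ)*Real.log (1-ρ) := by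
  have h1' : 0 < 1 - ρ := by linarith
  have a1 : Real.log (1/(2*ρ)) ≤ 1/(2*ρ) - 1 := Real.log_le_sub_one_of_pos (by positivity)
  have a2 : Real.log (1/(2*(1-ρ))) ≤ 1/(2*(1-ρ)) - 1 := Real.log_le_sub_one_of_pos (by positivity)
  have b1 : Real.log (1/(2*ρ)) = -(Real.log 2 + Real.log ρ) := by
    rw [one_div, Real.log_inv, Real.log_mul (by norm_num) h0.ne']
  have b2 : Real.log (1/(2*(1-ρ))) = -(Real.log 2 + Real.log (1-ρ)) := by
    rw [one_div, Real.log_inv, Real.log_mul (by norm_num) h1'.ne']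
  rw [b1] at a1; rw [b2] at a2
  have c1 : ρ * (-(Real.log 2 + Real.log ρ)) ≤ ρ * (1/(2*ρ) - 1) :=
    mul_le_mul_of_nonneg_left a1 h0.le
  have c2 : (1-ρ) * (-(Real.log 2 + Real.log (1-ρ))) ≤ (1-ρ) * (1/(2*(1-ρ)) - 1) :=
    mul_le_mul_of_nonneg_left a2 h1'.le
  have d1 : ρ * (1/(2*ρ) - 1) = 1/2 - ρ := by field_simp
  have d2 : (1-ρ) * (1/(2*(1-ρ)) - 1) = 1/2 - (1-ρ) := by field_simp
  rw [d1] at c1; rw [d2] at c2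
  nlinarith

theorem stmt_6 (e : ℝ) (he0 : 0 < e) (he : e < 1 / 2) :
    ∀ ρ : ℝ, -Real.log 2 - e / 2 ≤ Ghat e ρ := by
  intro ρ
  have hlog2 : 0 < Real.log 2 := Real.log_pos (by norm_num)
  have hle : Real.log e < 0 := Real.log_neg he0 (by linarith)
  unfold Ghat
  split_ifs with h1 h2
  · -- 1 - e ≤ ρ
    rcases le_or_gt 1 ρ with hρ1 | hρ1
    · have e1 : 0 ≤ Real.log ρ := Real.log_nonneg hρ1
      have e2 : 0 ≤ ρ * Real.log ρ := by nlinarith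
      have e3 : 0 ≤ (1-ρ)^2/(2*e) := by positivity
      have e4 : 0 ≤ (1-ρ) * Real.log e := by nlinarith
      linarith
    · set t := 1 - ρ with ht
      have ht0 : 0 < t := by simp [ht]; linarith
      have hte : t ≤ e := by simp [ht]; linarith
      have hρ0 : 0 < ρ := by linarith
      have e1 : Real.log ρ⁻¹ ≤ ρ⁻¹ - 1 := Real.log_le_sub_one_of_pos (by positivity)
      rw [Real.log_inv] at e1
      have e1' := mul_le_mul_of_nonneg_left e1 hρ0.le
      have e1'' : ρ * (ρ⁻¹ - 1) = 1 - ρ := by field_simp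
      have e4 : -t ≤ ρ * Real.log ρ := by rw [ht]; nlinarith
      have hq := quad e t he0 he ht0 hte
      have heq : (1-ρ)^2 = t^2 := by rw [ht]
      rw [heq]
      linarith
  · -- e ≤ ρ < 1 - e
    exact le_trans (by linarith) (mid ρ (by linarith) (by linarith))
  · -- ρ < e
    push_neg at h1 h2
    rcases le_or_gt ρ 0 with hρ0 | hρ0
    · have e1 : 0 ≤ Real.log (1-ρ) := Real.log_nonneg (by linarith)
      have e2 : 0 ≤ (1-ρ) * Real.log (1-ρ) := by nlinarith
      have e3 : 0 ≤ ρ^2/(2*e) := by positivity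
      have e4 : 0 ≤ ρ * Real.log e := by nlinarith
      linarith
    · have h1' : 0 < 1 - ρ := by linarith
      have e1 : Real.log (1-ρ)⁻¹ ≤ (1-ρ)⁻¹ - 1 := Real.log_le_sub_one_of_pos (by positivity)
      rw [Real.log_inv] at e1
      have e1' := mul_le_mul_of_nonneg_left e1 h1'.le
      have e1'' : (1-ρ) * ((1-ρ)⁻¹ - 1) = ρ := by field_simp; ring
      have e4 : -ρ ≤ (1-ρ) * Real.log (1-ρ) := by nlinarith
      have hq := quad e ρ he0 he hρ0 h2.le
      linarith
end
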